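/- Let 𝒞 ⊆ 𝔞 be a nonempty finitely generated convex set, F a face of 𝒞 with F ≠ 𝒞, and X_F a point of the relative interior of F. Then the relative interior 𝔞_F^+ of the normal cone N_𝒞(X_F) is given by 𝔞_F^+ = {Y ∈ 𝔞 : (Y, H − X_F) < 0 for all H ∈ 𝒞 ∖ F}. -/

import Mathlib

open Pointwise

variable {E : Type*} [NormedAddCommGroup E] [InnerProductSpace ℝ E] [FiniteDimensional ℝ E]

/-- A finitely generated convex set: a finite intersection of closed half-spaces. -/
def IsFGConvex (C : Set E) : Prop :=
  ∃ s : Finset (E × ℝ), C = {X | ∀ p ∈ s, (inner ℝ p.1 X : ℝ) ≤ p.2}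

/-- The tangent cone `T_C(H) = ℝ≥0 · (C - H)`. -/
def tangCone (C : Set E) (H : E) : Set E :=
  {X | ∃ t : ℝ, 0 ≤ t ∧ ∃ c ∈ C, X = t • (c - H)}

/-- The normal cone `N_C(H) = {Y | (Y,X) ≤ 0 for all X ∈ T_C(H)}`. -/
def normCone (C : Set E) (H : E) : Set E :=
  {Y | ∀ X ∈ tangCone C H, (inner ℝ Y X : ℝ) ≤ 0}

/-- A face of `C`: the (nonempty) intersection of `C` with a supporting affine hyperplane
`{H | (λ,H) = c}`, where `(λ,H) ≤ c` on all of `C` (the case `λ = 0` being allowed). -/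
def IsFace (C F : Set E) : Prop :=
  F.Nonempty ∧ ∃ (lam : E) (c : ℝ), (∀ H ∈ C, (inner ℝ lam H : ℝ) ≤ c) ∧
    F = {H | H ∈ C ∧ (inner ℝ lam H : ℝ) = c}

omit [FiniteDimensional ℝ E] in
lemma prolong {S : Set E} {Y v : E} (hY : Y ∈ intrinsicInterior ℝ S) (hv : v ∈ S) :
    ∃ ε : ℝ, 0 < ε ∧ Y + ε • (Y - v) ∈ S := by
  rw [mem_intrinsicInterior] at hY
  obtain ⟨y, hy, hyY⟩ := hY
  have hvs : v ∈ affineSpan ℝ S := subset_affineSpan ℝ S hv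
  have hYs : Y ∈ affineSpan ℝ S := hyY ▸ y.2
  have hmem : ∀ t : ℝ, t • (Y - v) + Y ∈ affineSpan ℝ S := by
    intro t
    have := (affineSpan ℝ S).smul_vsub_vadd_mem' t hYs hvs hYs
    simpa [vsub_eq_sub, vadd_eq_add] using this
  set γ : ℝ → affineSpan ℝ S := fun t => ⟨t • (Y - v) + Y, hmem t⟩ with hγ
  have hcont : Continuous γ := by
    apply Continuous.subtype_mk
    exact (continuous_id.smul continuous_const).add continuous_const
  have h0 : γ 0 ∈ interior ((↑) ⁻¹' S : Set <| affineSpan ℝ S) := by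
    have : γ 0 = y := by
      apply Subtype.ext
      simp [hγ, hyY]
    rw [this]; exact hy
  have hopen : IsOpen (γ ⁻¹' interior ((↑) ⁻¹' S : Set <| affineSpan ℝ S)) :=
    isOpen_interior.preimage hcont
  rw [Metric.isOpen_iff] at hopen
  obtain ⟨ε, hε, hball⟩ := hopen 0 h0
  refine ⟨ε / 2, by linarith, ?_⟩
  have h2 : (ε / 2 : ℝ) ∈ Metric.ball (0 : ℝ) ε := by
    rw [Metric.mem_ball, Real.dist_eq, sub_zero, abs_of_nonneg (by linarith)]
    linarith
  have := interior_subset (hball h2)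
  simpa [hγ, add_comm] using this

set_option maxHeartbeats 1000000 in
theorem stmt_3 (C F : Set E) (hC : IsFGConvex C) (hne : C.Nonempty)
    (hF : IsFace C F) (hFC : F ≠ C)
    (XF : E) (hXF : XF ∈ intrinsicInterior ℝ F) :
    intrinsicInterior ℝ (normCone C XF)
      = {Y | ∀ H ∈ C \ F, (inner ℝ Y (H - XF) : ℝ) < 0} := by
  classical
  obtain ⟨s, hCs⟩ := hC
  obtain ⟨-, lam, c, hlamC, hFdef⟩ := hF
  have hFsub : F ⊆ C := by rw [hFdef]; exact fun H h => h.1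
  have hXFF : XF ∈ F := intrinsicInterior_subset hXF
  have hXFC : XF ∈ C := hFsub hXFF
  have hmemC : ∀ X : E, X ∈ C ↔ ∀ p ∈ s, (inner ℝ p.1 X : ℝ) ≤ p.2 := by
    intro X; rw [hCs]; exact Iff.rfl
  set A : Finset (E × ℝ) := s.filter (fun p => (inner ℝ p.1 XF : ℝ) = p.2) with hA
  have hAs : ∀ p ∈ A, p ∈ s := fun p hp => (Finset.mem_filter.1 hp).1
  have hAeq : ∀ p ∈ A, (inner ℝ p.1 XF : ℝ) = p.2 := fun p hp => (Finset.mem_filter.1 hp).2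
  have hslack : ∀ p ∈ s, p ∉ A → (inner ℝ p.1 XF : ℝ) < p.2 := by
    intro p hp hpA
    rcases lt_or_eq_of_le ((hmemC XF).1 hXFC p hp) with h | h
    · exact h
    · exact absurd (Finset.mem_filter.2 ⟨hp, h⟩) hpA
  -- absorption: directions satisfying the active constraints can be followed a bit
  have absorb : ∀ X : E, (∀ p ∈ A, (inner ℝ p.1 X : ℝ) ≤ 0) →
      ∃ ε : ℝ, 0 < ε ∧ XF + ε • X ∈ C := by
    intro X hX
    set t := s.filter (fun p => 0 < (inner ℝ p.1 X : ℝ)) with ht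
    by_cases hne' : t.Nonempty
    · set f : E × ℝ → ℝ := fun p => (p.2 - (inner ℝ p.1 XF : ℝ)) / (inner ℝ p.1 X : ℝ) with hf
      set ε := t.inf' hne' f with hε
      have hpos : 0 < ε := by
        rw [hε, Finset.lt_inf'_iff]
        intro p hp
        have h1 : 0 < (inner ℝ p.1 X : ℝ) := (Finset.mem_filter.1 hp).2
        have hps : p ∈ s := (Finset.mem_filter.1 hp).1
        have hpA : p ∉ A := fun hmem => absurd (hX p hmem) (not_le.2 h1)
        exact div_pos (sub_pos.2 (hslack p hps hpA)) h1
      refine ⟨ε, hpos, ?_⟩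
      rw [hmemC]; intro p hp
      rw [inner_add_right, real_inner_smul_right]
      by_cases h1 : 0 < (inner ℝ p.1 X : ℝ)
      · have hpt : p ∈ t := Finset.mem_filter.2 ⟨hp, h1⟩
        have h2 : ε ≤ f p := Finset.inf'_le f hpt
        have h3 : ε * (inner ℝ p.1 X : ℝ) ≤ f p * (inner ℝ p.1 X : ℝ) :=
          mul_le_mul_of_nonneg_right h2 h1.le
        have h4 : f p * (inner ℝ p.1 X : ℝ) = p.2 - (inner ℝ p.1 XF : ℝ) := by
          rw [hf]; exact div_mul_cancel₀ _ (ne_of_gt h1)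
        linarith
      · have h2 : ε * (inner ℝ p.1 X : ℝ) ≤ 0 :=
          mul_nonpos_of_nonneg_of_nonpos hpos.le (not_lt.1 h1)
        have h3 := (hmemC XF).1 hXFC p hp
        linarith
    · refine ⟨1, one_pos, ?_⟩
      rw [hmemC]; intro p hp
      rw [inner_add_right, real_inner_smul_right, one_mul]
      have h1 : ¬ 0 < (inner ℝ p.1 X : ℝ) := fun h => hne' ⟨p, Finset.mem_filter.2 ⟨hp, h⟩⟩
      have h3 := (hmemC XF).1 hXFC p hp
      linarith [not_lt.1 h1]
  -- the tangent cone is the polyhedral cone of active constraints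
  have hT : ∀ X : E, X ∈ tangCone C XF ↔ ∀ p ∈ A, (inner ℝ p.1 X : ℝ) ≤ 0 := by
    intro X
    constructor
    · rintro ⟨t, ht, c', hc', rfl⟩ p hp
      rw [real_inner_smul_right, inner_sub_right]
      have h1 : (inner ℝ p.1 c' : ℝ) ≤ p.2 := (hmemC c').1 hc' p (hAs p hp)
      have h2 := hAeq p hp
      nlinarith
    · intro hX
      obtain ⟨ε, hε, hmem⟩ := absorb X hX
      exact ⟨ε⁻¹, (inv_pos.2 hε).le, XF + ε • X, hmem, by
        rw [add_sub_cancel_left, smul_smul, inv_mul_cancel₀ (ne_of_gt hε), one_smul]⟩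
  have hN : ∀ Y : E, Y ∈ normCone C XF ↔
      ∀ X : E, (∀ p ∈ A, (inner ℝ p.1 X : ℝ) ≤ 0) → (inner ℝ Y X : ℝ) ≤ 0 := by
    intro Y
    constructor
    · intro hY X hX; exact hY X ((hT X).2 hX)
    · intro hY X hX; exact hY X ((hT X).1 hX)
  -- points of C satisfying all active constraints with equality lie in F
  have L1 : ∀ H ∈ C, (∀ p ∈ A, (inner ℝ p.1 H : ℝ) = p.2) → H ∈ F := by
    intro H hH hEq
    have hK : ∀ p ∈ A, (inner ℝ p.1 (XF - H) : ℝ) ≤ 0 := by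
      intro p hp; rw [inner_sub_right, hAeq p hp, hEq p hp]; simp
    obtain ⟨ε, hε, hmem⟩ := absorb _ hK
    have h1 : (inner ℝ lam (XF + ε • (XF - H)) : ℝ) ≤ c := hlamC _ hmem
    have h2 : (inner ℝ lam H : ℝ) ≤ c := hlamC _ hH
    have h3 : (inner ℝ lam XF : ℝ) = c := (hFdef ▸ hXFF).2
    rw [inner_add_right, real_inner_smul_right, inner_sub_right, h3] at h1
    have h4 : (inner ℝ lam H : ℝ) = c := by nlinarith
    rw [hFdef]; exact ⟨hH, h4⟩
  -- points of F satisfy all active constraints with equality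
  have L2 : ∀ H ∈ F, ∀ p ∈ A, (inner ℝ p.1 H : ℝ) = p.2 := by
    intro H hH p hp
    obtain ⟨ε, hε, hmem⟩ := prolong hXF hH
    have h1 : (inner ℝ p.1 (XF + ε • (XF - H)) : ℝ) ≤ p.2 :=
      (hmemC _).1 (hFsub hmem) p (hAs p hp)
    have h2 : (inner ℝ p.1 H : ℝ) ≤ p.2 := (hmemC _).1 (hFsub hH) p (hAs p hp)
    have h3 := hAeq p hp
    rw [inner_add_right, real_inner_smul_right, inner_sub_right, h3] at h1
    nlinarith
  have hp0 : ∀ H ∈ C, H ∉ F → ∃ p ∈ A, (inner ℝ p.1 H : ℝ) < p.2 := by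
    intro H hH hHF
    by_contra h
    push_neg at h
    exact hHF (L1 H hH fun p hp => le_antisymm ((hmemC H).1 hH p (hAs p hp)) (h p hp))
  obtain ⟨H₀, hH₀C, hH₀F⟩ : ∃ H₀, H₀ ∈ C ∧ H₀ ∉ F := by
    obtain ⟨x, hx, hxF⟩ := Set.exists_of_ssubset (ssubset_of_subset_of_ne hFsub hFC)
    exact ⟨x, hx, hxF⟩
  apply Set.eq_of_subset_of_subset
  · -- relative interior ⊆ strict inequalities
    intro Y hY
    simp only [Set.mem_setOf_eq]
    intro H hH
    obtain ⟨hHC, hHF⟩ := hH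
    obtain ⟨p₀, hp₀A, hp₀lt⟩ := hp0 H hHC hHF
    have hYN : Y ∈ normCone C XF := intrinsicInterior_subset hY
    have hXK : ∀ p ∈ A, (inner ℝ p.1 (H - XF) : ℝ) ≤ 0 := fun p hp => by
      rw [inner_sub_right, hAeq p hp]
      linarith [(hmemC H).1 hHC p (hAs p hp)]
    have hle : (inner ℝ Y (H - XF) : ℝ) ≤ 0 := (hN Y).1 hYN _ hXK
    rcases lt_or_eq_of_le hle with h | h
    · exact h
    exfalso
    have hvN : p₀.1 ∈ normCone C XF := (hN _).2 fun X hX => hX p₀ hp₀A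
    obtain ⟨ε, hε, hmem⟩ := prolong hY hvN
    have hfin := (hN _).1 hmem _ hXK
    rw [inner_add_left, real_inner_smul_left, inner_sub_left, ← h] at hfin
    have hpX : (inner ℝ p₀.1 (H - XF) : ℝ) = (inner ℝ p₀.1 H : ℝ) - p₀.2 := by
      rw [inner_sub_right, hAeq p₀ hp₀A]
    nlinarith
  · -- strict inequalities ⊆ relative interior
    intro Y hY
    simp only [Set.mem_setOf_eq] at hY
    have hYstrict : ∀ X : E, (∀ p ∈ A, (inner ℝ p.1 X : ℝ) ≤ 0) →
        (∃ p ∈ A, (inner ℝ p.1 X : ℝ) < 0) → (inner ℝ Y X : ℝ) < 0 := by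
      rintro X hX ⟨p₀, hp₀, hlt⟩
      obtain ⟨ε, hε, hmem⟩ := absorb X hX
      have hHF : XF + ε • X ∉ F := by
        intro hmemF
        have h5 := L2 _ hmemF p₀ hp₀
        rw [inner_add_right, real_inner_smul_right, hAeq p₀ hp₀] at h5
        nlinarith
      have h6 := hY _ ⟨hmem, hHF⟩
      rw [add_sub_cancel_left, real_inner_smul_right] at h6
      nlinarith
    have hd0 : (inner ℝ Y (H₀ - XF) : ℝ) < 0 := hY _ ⟨hH₀C, hH₀F⟩
    have hH₀K : ∀ p ∈ A, (inner ℝ p.1 (H₀ - XF) : ℝ) ≤ 0 := fun p hp => by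
      rw [inner_sub_right, hAeq p hp]
      linarith [(hmemC H₀).1 hH₀C p (hAs p hp)]
    obtain ⟨q₀, hq₀A, hq₀lt⟩ := hp0 H₀ hH₀C hH₀F
    have hq₀X : (inner ℝ q₀.1 (H₀ - XF) : ℝ) < 0 := by
      rw [inner_sub_right, hAeq q₀ hq₀A]; linarith
    -- Y lies in the normal cone
    have hYN : Y ∈ normCone C XF := by
      rw [hN]
      intro X hX
      by_cases hWc : ∃ p ∈ A, (inner ℝ p.1 X : ℝ) < 0
      · exact (hYstrict X hX hWc).le
      · push_neg at hWc
        have hXW : ∀ p ∈ A, (inner ℝ p.1 X : ℝ) = 0 := fun p hp =>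
          le_antisymm (hX p hp) (hWc p hp)
        by_contra hpos
        push_neg at hpos
        set μ : ℝ := (inner ℝ Y X : ℝ) / (2 * -(inner ℝ Y (H₀ - XF) : ℝ)) with hμ
        have hμpos : 0 < μ := div_pos hpos (by linarith)
        have hX' : ∀ p ∈ A, (inner ℝ p.1 (X + μ • (H₀ - XF)) : ℝ) ≤ 0 := by
          intro p hp
          rw [inner_add_right, real_inner_smul_right, hXW p hp]
          have := hH₀K p hp
          nlinarith
        have hstrict := hYstrict _ hX' ⟨q₀, hq₀A, by
          rw [inner_add_right, real_inner_smul_right, hXW q₀ hq₀A]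
          nlinarith⟩
        rw [inner_add_right, real_inner_smul_right] at hstrict
        have hcancel : μ * (2 * -(inner ℝ Y (H₀ - XF) : ℝ)) = (inner ℝ Y X : ℝ) :=
          div_mul_cancel₀ _ (by linarith)
        nlinarith
    -- the orthogonal decomposition setup
    set V : Submodule ℝ E := Submodule.span ℝ (Prod.fst '' (A : Set (E × ℝ))) with hV
    set Wsub : Submodule ℝ E := Vᗮ with hWsub
    have hWmem1 : ∀ w : E, w ∈ Wsub → ∀ p ∈ A, (inner ℝ p.1 w : ℝ) = 0 := by
      intro w hw p hp
      exact (Submodule.mem_orthogonal V w).1 hw p.1 (Submodule.subset_span ⟨p, hp, rfl⟩)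
    have hWmem2 : ∀ w : E, (∀ p ∈ A, (inner ℝ p.1 w : ℝ) = 0) → w ∈ Wsub := by
      intro w h
      rw [hWsub, Submodule.mem_orthogonal]
      intro v hv
      induction hv using Submodule.span_induction with
      | mem x hx => obtain ⟨p, hp, rfl⟩ := hx; exact h p hp
      | zero => exact inner_zero_left w
      | add x y _ _ hx hy => rw [inner_add_left, hx, hy, add_zero]
      | smul a x _ hx => rw [real_inner_smul_left, hx, mul_zero]
    have hNW : ∀ Z ∈ normCone C XF, Z ∈ Wsubᗮ := by
      intro Z hZ
      rw [Submodule.mem_orthogonal]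
      intro w hw
      have h1 : ∀ p ∈ A, (inner ℝ p.1 w : ℝ) ≤ 0 := fun p hp => le_of_eq (hWmem1 w hw p hp)
      have h2 : ∀ p ∈ A, (inner ℝ p.1 (-w) : ℝ) ≤ 0 := fun p hp => by
        rw [inner_neg_right]; linarith [hWmem1 w hw p hp]
      have h3 := (hN Z).1 hZ w h1
      have h4 := (hN Z).1 hZ (-w) h2
      rw [inner_neg_right] at h4
      have h5 : (inner ℝ Z w : ℝ) = 0 := le_antisymm h3 (by linarith)
      rw [real_inner_comm]; exact h5
    -- the compact slice of the tangent cone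
    have hclosed1 : IsClosed {x : E | ∀ p ∈ A, (inner ℝ p.1 x : ℝ) ≤ 0} := by
      have heq : {x : E | ∀ p ∈ A, (inner ℝ p.1 x : ℝ) ≤ 0}
          = ⋂ p ∈ A, {x : E | (inner ℝ p.1 x : ℝ) ≤ 0} := by
        ext x; simp
      rw [heq]
      refine isClosed_biInter fun p hp => ?_
      have hc : Continuous fun x : E => (inner ℝ p.1 x : ℝ) :=
        Continuous.inner continuous_const continuous_id
      exact isClosed_le hc continuous_const
    have hclosed : IsClosed ({x : E | ∀ p ∈ A, (inner ℝ p.1 x : ℝ) ≤ 0} ∩ (Wsubᗮ : Set E)) :=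
      hclosed1.inter Wsubᗮ.closed_of_finiteDimensional
    set Sc : Set E :=
      ({x : E | ∀ p ∈ A, (inner ℝ p.1 x : ℝ) ≤ 0} ∩ (Wsubᗮ : Set E)) ∩ Metric.sphere 0 1 with hSc
    have hSccompact : IsCompact Sc := (isCompact_sphere 0 1).inter_left hclosed
    have hYU : ∀ x ∈ Sc, (inner ℝ Y x : ℝ) < 0 := by
      rintro x ⟨⟨hxK, hxW⟩, hxs⟩
      have hxnorm : ‖x‖ = 1 := mem_sphere_zero_iff_norm.1 hxs
      have hxne : x ≠ 0 := by intro h; rw [h, norm_zero] at hxnorm; norm_num at hxnorm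
      refine hYstrict x hxK ?_
      by_contra h
      push_neg at h
      have hxWsub : x ∈ Wsub := hWmem2 x fun p hp => le_antisymm (hxK p hp) (h p hp)
      have h6 : (inner ℝ x x : ℝ) = 0 := (Submodule.mem_orthogonal Wsub x).1 hxW x hxWsub
      exact hxne (inner_self_eq_zero.1 h6)
    have hUopen : IsOpen {Z : E | ∀ x ∈ Sc, (inner ℝ Z x : ℝ) < 0} := by
      rw [Metric.isOpen_iff]
      intro Z hZ
      rcases Sc.eq_empty_or_nonempty with hemp | hne'
      · exact ⟨1, one_pos, fun w _ x hx => absurd hx (hemp ▸ Set.notMem_empty x)⟩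
      · have hcont : ContinuousOn (fun x : E => (inner ℝ Z x : ℝ)) Sc :=
          (Continuous.inner continuous_const continuous_id).continuousOn
        obtain ⟨x₀, hx₀, hmax⟩ := hSccompact.exists_isMaxOn hne' hcont
        have hm : (inner ℝ Z x₀ : ℝ) < 0 := hZ x₀ hx₀
        refine ⟨-(inner ℝ Z x₀ : ℝ), by linarith, ?_⟩
        intro w hw x hx
        have h1 : (inner ℝ Z x : ℝ) ≤ (inner ℝ Z x₀ : ℝ) := hmax hx
        have h2 : (inner ℝ (w - Z) x : ℝ) ≤ ‖w - Z‖ * ‖x‖ := real_inner_le_norm _ _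
        have hxnorm : ‖x‖ = 1 := mem_sphere_zero_iff_norm.1 hx.2
        have h3 : ‖w - Z‖ < -(inner ℝ Z x₀ : ℝ) := by
          rw [← dist_eq_norm]; exact hw
        have h4 : (inner ℝ w x : ℝ) = (inner ℝ Z x : ℝ) + (inner ℝ (w - Z) x : ℝ) := by
          rw [inner_sub_left]; ring
        rw [hxnorm, mul_one] at h2
        rw [Set.mem_setOf_eq] at *
        linarith
    -- assembling the relative interior membership
    rw [mem_intrinsicInterior]
    have hYaff : Y ∈ affineSpan ℝ (normCone C XF) := subset_affineSpan ℝ _ hYN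
    refine ⟨⟨Y, hYaff⟩, ?_, rfl⟩
    have haffW : (affineSpan ℝ (normCone C XF) : Set E) ⊆ (Wsubᗮ : Set E) := by
      intro z hz
      have hle : affineSpan ℝ (normCone C XF) ≤ (Wsubᗮ).toAffineSubspace := by
        rw [affineSpan_le]
        intro u hu
        exact hNW u hu
      exact hle hz
    have hsub : (Subtype.val ⁻¹' {Z : E | ∀ x ∈ Sc, (inner ℝ Z x : ℝ) < 0} :
          Set (affineSpan ℝ (normCone C XF))) ⊆ Subtype.val ⁻¹' normCone C XF := by
      rintro ⟨Z, hZaff⟩ hZU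
      simp only [Set.mem_preimage, Set.mem_setOf_eq] at hZU ⊢
      rw [hN]
      intro X hX
      have hZW : Z ∈ Wsubᗮ := haffW hZaff
      set w : E := (Wsub.orthogonalProjectionOnto X : E) with hw
      have hwW : w ∈ Wsub := (Wsub.orthogonalProjectionOnto X).2
      have hxW : X - w ∈ Wsubᗮ := Submodule.sub_starProjection_mem_orthogonal (K := Wsub) X
      have hZw : (inner ℝ Z w : ℝ) = 0 := by
        have := (Submodule.mem_orthogonal Wsub Z).1 hZW w hwW
        rw [real_inner_comm] at this; exact this
      have hxK : ∀ p ∈ A, (inner ℝ p.1 (X - w) : ℝ) ≤ 0 := fun p hp => by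
        rw [inner_sub_right, hWmem1 w hwW p hp, sub_zero]
        exact hX p hp
      have hZX : (inner ℝ Z X : ℝ) = (inner ℝ Z (X - w) : ℝ) := by
        rw [inner_sub_right, hZw, sub_zero]
      rw [hZX]
      by_cases hx0 : X - w = 0
      · rw [hx0, inner_zero_right]
      · have hnormpos : 0 < ‖X - w‖ := norm_pos_iff.2 hx0
        have hmemSc : ‖X - w‖⁻¹ • (X - w) ∈ Sc := by
          refine ⟨⟨fun p hp => ?_, Submodule.smul_mem _ _ hxW⟩, ?_⟩
          · rw [real_inner_smul_right]
            exact mul_nonpos_of_nonneg_of_nonpos (inv_nonneg.2 hnormpos.le) (hxK p hp)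
          · rw [mem_sphere_zero_iff_norm, norm_smul, norm_inv, norm_norm,
              inv_mul_cancel₀ (ne_of_gt hnormpos)]
        have h7 := hZU _ hmemSc
        rw [real_inner_smul_right] at h7
        nlinarith [inv_pos.2 hnormpos]
    have hmemU : (⟨Y, hYaff⟩ : affineSpan ℝ (normCone C XF)) ∈
        (Subtype.val ⁻¹' {Z : E | ∀ x ∈ Sc, (inner ℝ Z x : ℝ) < 0} :
          Set (affineSpan ℝ (normCone C XF))) := hYU
    exact interior_maximal hsub (hUopen.preimage continuous_subtype_val) hmemU
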